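/- Let F be an ordered field, {v_1,...,v_n} a basis of F^n with dual basis {v_1*,...,v_n*}, and define c(v_1,...,v_n)(w) = sign det(v_1,...,v_n) if v_i*(w) > 0 for all i, and 0 otherwise. Then for all w ∈ F^n with w, v_1, ..., v_n in general position, c(v_1,...,v_n)(w) = (-1)^n · d(v_1, ..., v_n, -w). -/

import Mathlib

open Matrix
open scoped BigOperators

/-- A family of vectors in `F^n` is *in general position* if every subset with
at most `n` elements is linearly independent. -/
def GenPos {F : Type*} [Field F] {n m : ℕ} (v : Fin m → (Fin n → F)) : Prop :=
  ∀ s : Finset (Fin m), s.card ≤ n → LinearIndependent F (fun i : s => v i.1)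

/-- The sign of an element of an ordered field. -/
def sgn {F : Type*} [Field F] [LinearOrder F] [IsStrictOrderedRing F] (x : F) : ℤ :=
  if 0 < x then 1 else if x < 0 then -1 else 0

open Classical in
/-- The function `d` of the Shintani cocycle construction: for `v_0, ..., v_n` in
general position in `F^n`, it equals `(-1)^i sgn det(v_0,...,v̂_i,...,v_n)` (computed
here with `i = 0`) if the coefficients of the linear relation among the `v_j` all have
the same sign, and `0` otherwise. -/
noncomputable def dFun {F : Type*} [Field F] [LinearOrder F] [IsStrictOrderedRing F] {n : ℕ}
    (v : Fin (n + 1) → (Fin n → F)) : ℤ :=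
  if ∃ lam : Fin (n + 1) → F, (∀ i, lam i ≠ 0) ∧ (∑ i, lam i • v i) = 0 ∧
      ((∀ i, 0 < lam i) ∨ (∀ i, lam i < 0))
  then sgn (Matrix.of (fun r (j : Fin n) => v j.succ r)).det
  else 0

open Classical in
/-- The signed characteristic function of the open cone spanned by the basis
`v_1, ..., v_n`:  `c(v_1,...,v_n)(w) = sgn det(v_1,...,v_n)` if all coordinates of `w`
with respect to the basis (i.e. the values of the dual basis at `w`) are positive,
and `0` otherwise. -/
noncomputable def cFun {F : Type*} [Field F] [LinearOrder F] [IsStrictOrderedRing F] {n : ℕ}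
    (v : Fin n → (Fin n → F)) (w : Fin n → F) : ℤ :=
  let M : Matrix (Fin n) (Fin n) F := Matrix.of fun r j => v j r
  if ∀ i, 0 < (M⁻¹ *ᵥ w) i then sgn M.det else 0

lemma sgn_mul {F : Type*} [Field F] [LinearOrder F] [IsStrictOrderedRing F] (x y : F) :
    sgn (x * y) = sgn x * sgn y := by
  unfold sgn
  rcases lt_trichotomy 0 x with hx|hx|hx <;> rcases lt_trichotomy 0 y with hy|hy|hy <;>
    first
    | (subst hx; simp)
    | (subst hy; simp)
    | simp [hx, hy, asymm hx, asymm hy, mul_pos hx hy, asymm (mul_pos hx hy)]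
    | simp [hx, hy, asymm hx, asymm hy, mul_neg_of_pos_of_neg hx hy,
        asymm (mul_neg_of_pos_of_neg hx hy)]
    | simp [hx, hy, asymm hx, asymm hy, mul_neg_of_neg_of_pos hx hy,
        asymm (mul_neg_of_neg_of_pos hx hy)]
    | simp [hx, hy, asymm hx, asymm hy, mul_pos_of_neg_of_neg hx hy,
        asymm (mul_pos_of_neg_of_neg hx hy)]

lemma sgn_one {F : Type*} [Field F] [LinearOrder F] [IsStrictOrderedRing F] : sgn (1 : F) = 1 := by
  simp [sgn]

lemma sgn_pos {F : Type*} [Field F] [LinearOrder F] [IsStrictOrderedRing F] {x : F} (h : 0 < x) : sgn x = 1 := by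
  simp [sgn, h]

lemma sgn_neg_one_pow {F : Type*} [Field F] [LinearOrder F] [IsStrictOrderedRing F] (n : ℕ) :
    sgn ((-1 : F) ^ n) = (-1 : ℤ) ^ n := by
  rcases Nat.even_or_odd n with h | h
  · rw [h.neg_one_pow, h.neg_one_pow, sgn_one]
  · rw [h.neg_one_pow, h.neg_one_pow]
    simp [sgn]

/-- The signed cone function `c` in terms of `d`:
`c(v_1,...,v_n)(w) = (-1)^n · d(v_1, ..., v_n, -w)`, whenever `w, v_1, ..., v_n` are in
general position and `v_1, ..., v_n` form a basis of `F^n`. -/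
theorem stmt7 {F : Type*} [Field F] [LinearOrder F] [IsStrictOrderedRing F] {n : ℕ}
    (v : Fin n → (Fin n → F)) (hb : LinearIndependent F v)
    (w : Fin n → F) (hgp : GenPos (Fin.cons w v : Fin (n + 1) → Fin n → F)) :
    cFun v w = (-1 : ℤ) ^ n * dFun (Fin.snoc v (-w)) := by
  classical
  obtain rfl | hn := eq_or_ne n 0
  · simp only [cFun, dFun, pow_zero, one_mul]
    rw [if_pos, if_pos]
    · rw [Matrix.det_isEmpty, Matrix.det_isEmpty]
    · exact ⟨fun _ => 1, fun _ => one_ne_zero, Subsingleton.elim _ _,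
        Or.inl fun _ => one_pos⟩
    · exact fun i => i.elim0
  obtain ⟨m, rfl⟩ := Nat.exists_eq_succ_of_ne_zero hn
  set n := m + 1 with hn'
  set M : Matrix (Fin n) (Fin n) F := Matrix.of fun r j => v j r with hM
  have hunit : IsUnit M := by
    rw [← Matrix.linearIndependent_cols_iff_isUnit]
    exact hb
  have hdet : IsUnit M.det := (Matrix.isUnit_iff_isUnit_det M).mp hunit
  have hdet0 : M.det ≠ 0 := hdet.ne_zero
  set a : Fin n → F := M⁻¹ *ᵥ w with ha
  have hMa : M *ᵥ a = w := by
    rw [ha, Matrix.mulVec_mulVec, Matrix.mul_nonsing_inv _ hdet, Matrix.one_mulVec]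
  have hw : ∑ j, a j • v j = w := by
    funext r
    have := congrFun hMa r
    simp only [Matrix.mulVec, dotProduct, hM, Matrix.of_apply] at this
    rw [← this]
    simp [Finset.sum_apply, mul_comm]
  have key : (∀ i, 0 < a i) ↔
      (∃ lam : Fin (n + 1) → F, (∀ i, lam i ≠ 0) ∧
        (∑ i, lam i • (Fin.snoc v (-w) : Fin (n+1) → Fin n → F) i) = 0 ∧
        ((∀ i, 0 < lam i) ∨ (∀ i, lam i < 0))) := by
    constructor
    · intro hC
      refine ⟨Fin.snoc a 1, ?_, ?_, Or.inl ?_⟩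
      · intro i
        refine Fin.lastCases ?_ ?_ i
        · simp
        · intro j; simp [(hC j).ne']
      · rw [Fin.sum_univ_castSucc]
        simp only [Fin.snoc_castSucc, Fin.snoc_last, one_smul]
        rw [hw]
        exact add_neg_cancel w
      · refine Fin.lastCases ?_ (fun j => ?_)
        · simp
        · simpa using hC j
    · rintro ⟨lam, hne, hsum, hsign⟩
      rw [Fin.sum_univ_castSucc] at hsum
      simp only [Fin.snoc_castSucc, Fin.snoc_last, smul_neg] at hsum
      have hEq : ∑ i, lam i.castSucc • v i = lam (Fin.last n) • w :=
        add_neg_eq_zero.mp hsum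
      have hg : ∑ i, (lam i.castSucc - lam (Fin.last n) * a i) • v i = 0 := by
        simp only [sub_smul, mul_smul]
        rw [Finset.sum_sub_distrib, hEq, ← Finset.smul_sum, hw, sub_self]
      have hco := Fintype.linearIndependent_iff.mp hb
        (fun i => lam i.castSucc - lam (Fin.last n) * a i) hg
      intro i
      have h1 : lam i.castSucc = lam (Fin.last n) * a i := sub_eq_zero.mp (hco i)
      have h2 : a i = lam i.castSucc / lam (Fin.last n) := by
        rw [eq_div_iff (hne (Fin.last n)), h1, mul_comm]
      rw [h2]
      rcases hsign with hp | hm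
      · exact div_pos (hp _) (hp _)
      · exact div_pos_iff.mpr (Or.inr ⟨hm _, hm _⟩)
  set N : Matrix (Fin n) (Fin n) F :=
    Matrix.of (fun r (j : Fin n) => (Fin.snoc v (-w) : Fin (n+1) → Fin n → F) j.succ r)
    with hN
  set B : Matrix (Fin n) (Fin n) F :=
    Matrix.of (fun i j => if j = Fin.last m then -a i else
      if (i : ℕ) = (j : ℕ) + 1 then 1 else 0) with hB
  have hNB : N = M * B := by
    ext i j
    rw [Matrix.mul_apply]
    by_cases hj : j = Fin.last m
    · subst hj
      have hMai := congrFun hMa i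
      simp only [Matrix.mulVec, dotProduct] at hMai
      simp only [hN, hB, Matrix.of_apply, Fin.succ_last, Fin.snoc_last, Pi.neg_apply,
        if_true, eq_self_iff_true, mul_neg, ← Finset.sum_neg_distrib, ← hMai]
      rw [Finset.sum_neg_distrib, hMai]
      exact congrFun (Fin.snoc_last (α := fun _ => Fin n → F) (p := v) (x := -w)) i
    · have hjm : (j : ℕ) < m := lt_of_le_of_ne (Nat.lt_succ_iff.mp j.isLt)
        (fun h => hj (Fin.ext h))
      have hsucc : (j.succ : Fin (n+1)) = Fin.castSucc ⟨(j : ℕ) + 1, Nat.succ_lt_succ hjm⟩ := by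
        apply Fin.ext; simp
      have hcond : ∀ k : Fin n, ((k:ℕ) = (j:ℕ)+1) = (k = ⟨(j : ℕ) + 1, Nat.succ_lt_succ hjm⟩) :=
        fun k => by simp [Fin.ext_iff]
      simp only [hN, hB, hM, Matrix.of_apply, if_neg hj, hsucc, Fin.snoc_castSucc, hcond,
        mul_ite, mul_one, mul_zero, Finset.sum_ite_eq', Finset.mem_univ, if_pos]
  have hdetB : B.det = (-1:F)^n * a 0 := by
    rw [Matrix.det_succ_column B (Fin.last m)]
    rw [Finset.sum_eq_single (0 : Fin n)]
    · have hsub : B.submatrix (Fin.succAbove 0) ((Fin.last m).succAbove) = 1 := by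
        ext r c
        simp only [Matrix.submatrix_apply, Fin.succAbove_zero, Fin.succAbove_last, hB,
          Matrix.of_apply, Matrix.one_apply, Fin.val_succ, Fin.coe_castSucc,
          if_neg (Fin.castSucc_lt_last c).ne, add_left_inj, Fin.val_inj]
      rw [hsub, Matrix.det_one, mul_one]
      have hB0 : B 0 (Fin.last m) = -a 0 := by simp [hB]
      rw [hB0]
      simp only [Fin.val_zero, Fin.val_last, zero_add, hn', pow_succ]
      ring
    · intro i _ hi
      rcases Nat.eq_zero_or_pos m with hm | hm
      · subst hm; exact absurd (Fin.ext (Nat.lt_one_iff.mp i.isLt)) hi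
      · have : NeZero m := ⟨hm.ne'⟩
        rw [Matrix.det_eq_zero_of_row_eq_zero (0 : Fin m) ?_, mul_zero]
        intro c
        have h0 : i.succAbove 0 = 0 := by
          rw [Fin.succAbove_of_castSucc_lt]
          · exact Fin.castSucc_zero'
          · rw [Fin.castSucc_zero']; exact Fin.pos_of_ne_zero hi
        simp only [Matrix.submatrix_apply, h0, Fin.succAbove_last, hB, Matrix.of_apply,
          if_neg (Fin.castSucc_lt_last c).ne, Fin.val_zero, Fin.coe_castSucc]
        exact if_neg (by omega)
    · simp
  have hdetN : N.det = M.det * ((-1:F)^n * a 0) := by rw [hNB, Matrix.det_mul, hdetB]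
  simp only [cFun, dFun]
  rw [← hM, ← ha, ← hN]
  by_cases hC : ∀ i, 0 < a i
  · rw [if_pos hC, if_pos (key.mp hC)]
    rw [hdetN, sgn_mul, sgn_mul, sgn_neg_one_pow, sgn_pos (hC 0), mul_one]
    have h4 : ((-1:ℤ)^(m+1)) * ((-1:ℤ)^(m+1)) = 1 := by
      rw [← pow_add]; exact Even.neg_one_pow ⟨m+1, rfl⟩
    simp only [hn', Nat.succ_eq_add_one]
    rw [show ((-1:ℤ)^(m+1)) * (sgn M.det * (-1:ℤ)^(m+1))
        = sgn M.det * (((-1:ℤ)^(m+1)) * ((-1:ℤ)^(m+1))) from by ring, h4, mul_one]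
  · rw [if_neg hC, if_neg fun h => hC (key.mpr h), mul_zero]
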